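/- Let Γ act minimally by homeomorphisms on a compact metric space X, let c be a continuous cocycle, and let Γ act on X × ℝ by f̂(x, t) = (f·x, t + c(f, x)). If M ⊆ X × ℝ is a nonempty compact set that is invariant and minimal for this action (i.e., contains no proper nonempty compact invariant subset), then M is the graph of a continuous function φ : X → ℝ, and c(f, x) = φ(f·x) − φ(x) for all f ∈ Γ and x ∈ X. -/

import Mathlib

/-- A minimal nonempty compact invariant set `M` for the skew-product action
`f̂(x,t) = (f • x, t + c(f,x))` over a minimal action on a compact metric space is the
graph of a continuous function `φ`, and `c` is the coboundary of `φ`. -/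
theorem stmt3 {Γ X : Type*} [Group Γ] [MetricSpace X] [CompactSpace X]
    [MulAction Γ X] [ContinuousConstSMul Γ X]
    (hmin : ∀ x : X, Dense (MulAction.orbit Γ x))
    (c : Γ → X → ℝ) (hc : ∀ f : Γ, Continuous (c f))
    (hcoc : ∀ f g : Γ, ∀ x : X, c (f * g) x = c g x + c f (g • x))
    (M : Set (X × ℝ)) (hMne : M.Nonempty) (hMcomp : IsCompact M)
    (hMinv : ∀ f : Γ, (fun p : X × ℝ => (f • p.1, p.2 + c f p.1)) '' M ⊆ M)
    (hMmin : ∀ M' : Set (X × ℝ), M' ⊆ M → M'.Nonempty → IsCompact M' →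
      (∀ f : Γ, (fun p : X × ℝ => (f • p.1, p.2 + c f p.1)) '' M' ⊆ M') → M' = M) :
    ∃ φ : X → ℝ, Continuous φ ∧ M = {p : X × ℝ | p.2 = φ p.1} ∧
      ∀ f : Γ, ∀ x : X, c f x = φ (f • x) - φ x := by
  classical
  have hMinv' : ∀ f : Γ, ∀ p ∈ M, ((f • p.1 : X), p.2 + c f p.1) ∈ M := by
    intro f p hp
    exact hMinv f ⟨p, hp, rfl⟩
  -- surjectivity of the first projection
  have hsurj : ∀ x : X, ∃ t : ℝ, (x, t) ∈ M := by
    intro x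
    obtain ⟨p, hp⟩ := hMne
    have hS : IsClosed (Prod.fst '' M) := (hMcomp.image continuous_fst).isClosed
    have horb : MulAction.orbit Γ p.1 ⊆ Prod.fst '' M := by
      rintro _ ⟨f, rfl⟩
      exact ⟨((f • p.1 : X), p.2 + c f p.1), hMinv' f p hp, rfl⟩
    have hx : x ∈ Prod.fst '' M := by
      have h1 : x ∈ closure (MulAction.orbit Γ p.1) := (hmin p.1) x
      have h2 : closure (MulAction.orbit Γ p.1) ⊆ Prod.fst '' M := by
        rw [← hS.closure_eq]; exact closure_mono horb
      exact h2 h1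
    obtain ⟨q, hq, hq1⟩ := hx
    refine ⟨q.2, ?_⟩
    rw [← hq1]
    simpa using hq
  -- a bound on the second coordinate
  obtain ⟨r, hr⟩ : ∃ r : ℝ, ∀ p ∈ M, |p.2| ≤ r := by
    obtain ⟨R, hR⟩ := (hMcomp.image continuous_snd).isBounded.exists_norm_le
    exact ⟨R, fun p hp => by simpa [Real.norm_eq_abs] using hR p.2 ⟨p, hp, rfl⟩⟩
  -- fibers are singletons
  have hlt : ∀ (x : X) (s t : ℝ), (x, s) ∈ M → (x, t) ∈ M → s < t → False := by
    intro x s t hs ht hst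
    set d : ℝ := t - s with hd
    have hdpos : 0 < d := by simp [hd]; linarith
    set M' : Set (X × ℝ) := M ∩ {p : X × ℝ | (p.1, p.2 - d) ∈ M} with hM'
    have hMeq : M' = M := by
      apply hMmin
      · exact Set.inter_subset_left
      · refine ⟨(x, t), ht, ?_⟩
        simp only [Set.mem_setOf_eq]
        have : t - d = s := by simp [hd]
        rw [this]; exact hs
      · refine hMcomp.inter_right ?_
        have : {p : X × ℝ | (p.1, p.2 - d) ∈ M}
            = (fun p : X × ℝ => (p.1, p.2 - d)) ⁻¹' M := rfl
        rw [this]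
        exact hMcomp.isClosed.preimage (by fun_prop)
      · rintro f _ ⟨p, ⟨hpM, hpT⟩, rfl⟩
        refine ⟨hMinv' f p hpM, ?_⟩
        have := hMinv' f (p.1, p.2 - d) hpT
        simp only [Set.mem_setOf_eq]
        have he : p.2 + c f p.1 - d = p.2 - d + c f p.1 := by ring
        rw [he]
        exact this
    have hdown : ∀ p ∈ M, ((p.1 : X), p.2 - d) ∈ M := by
      intro p hp
      have : p ∈ M' := hMeq ▸ hp
      exact this.2
    have hiter : ∀ n : ℕ, (x, t - n * d) ∈ M := by
      intro n
      induction n with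
      | zero => simpa using ht
      | succ k ih =>
        have := hdown (x, t - k * d) ih
        have he : t - k * d - d = t - (k + 1 : ℕ) * d := by push_cast; ring
        rw [he] at this
        exact this
    obtain ⟨n, hn⟩ := exists_nat_gt ((r + |t|) / d)
    have hnd : r + |t| < n * d := by
      rw [div_lt_iff₀ hdpos] at hn; linarith
    have h1 : |t - n * d| ≤ r := hr _ (hiter n)
    have h2 : (n : ℝ) * d - t ≤ |t - n * d| := by
      rw [abs_sub_comm]; exact le_abs_self _
    have h3 : t ≤ |t| := le_abs_self t
    linarith
  have huniq : ∀ (x : X) (s t : ℝ), (x, s) ∈ M → (x, t) ∈ M → s = t := by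
    intro x s t hs ht
    rcases lt_trichotomy s t with h | h | h
    · exact absurd (hlt x s t hs ht h) (fun h => h)
    · exact h
    · exact absurd (hlt x t s ht hs h) (fun h => h)
  -- the function φ
  set φ : X → ℝ := fun x => (hsurj x).choose with hφ
  have hφM : ∀ x : X, (x, φ x) ∈ M := fun x => (hsurj x).choose_spec
  -- continuity
  have hcont : Continuous φ := by
    rw [continuous_iff_continuousAt]
    intro x
    have key : Filter.Tendsto (fun y : X => (y, φ y)) (nhds x) (nhds (x, φ x)) := by
      apply hMcomp.tendsto_nhds_of_unique_mapClusterPt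
      · exact Filter.Eventually.of_forall fun y => hφM y
      · intro p hpM hcl
        have h1 : MapClusterPt p.1 (nhds x) (Prod.fst ∘ fun y : X => (y, φ y)) :=
          hcl.continuousAt_comp continuous_fst.continuousAt
        have h2 : ClusterPt p.1 (nhds x) := by
          simpa [MapClusterPt, Filter.map_id, Function.comp_def, Filter.map_id'] using h1
        have hx : p.1 = x := eq_of_nhds_neBot h2
        have hp2 : p.2 = φ x := by
          refine huniq x p.2 (φ x) ?_ (hφM x)
          rw [← hx]
          simpa using hpM
        exact Prod.ext hx hp2
    exact (continuous_snd.tendsto _).comp key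
  refine ⟨φ, hcont, ?_, ?_⟩
  · ext p
    constructor
    · intro hp
      have hp' : (p.1, p.2) ∈ M := by simpa using hp
      exact huniq p.1 p.2 (φ p.1) hp' (hφM p.1)
    · intro hp
      have : p = (p.1, φ p.1) := Prod.ext rfl hp
      rw [this]
      exact hφM p.1
  · intro f x
    have h1 : ((f • x : X), φ x + c f x) ∈ M := hMinv' f (x, φ x) (hφM x)
    have h2 : φ x + c f x = φ (f • x) := huniq _ _ _ h1 (hφM _)
    linarith
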